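/- Let G be a finite nonempty interval graph and v a vertex of G such that no vertex of the closed neighborhood N[v] is simplicial in G. Then N[v] is a separator of G: the graph G − N[v] is disconnected (it is nonempty and not connected). -/

import Mathlib

/-- A graph is an interval graph if each vertex can be assigned a (nonempty) closed real
interval such that two distinct vertices are adjacent iff their intervals intersect. -/
def IsIntervalGraph {V : Type*} (G : SimpleGraph V) : Prop :=
  ∃ f : V → Set ℝ,
    (∀ v, ∃ a b : ℝ, a ≤ b ∧ f v = Set.Icc a b) ∧
    ∀ u v : V, u ≠ v → (G.Adj u v ↔ (f u ∩ f v).Nonempty)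

/-- A hole is an induced (chordless) cycle on at least 4 vertices, identified
with its vertex set. -/
def IsHole {V : Type*} (G : SimpleGraph V) (H : Set V) : Prop :=
  ∃ m : ℕ, 4 ≤ m ∧ ∃ f : ZMod m → V,
    Function.Injective f ∧ Set.range f = H ∧
      ∀ i j : ZMod m, G.Adj (f i) (f j) ↔ (j = i + 1 ∨ i = j + 1)

/-- A minimal forbidden set: the induced subgraph is not interval, but every
proper subset induces an interval graph. -/
def IsMinimalForbidden {V : Type*} (G : SimpleGraph V) (X : Set V) : Prop :=
  ¬ IsIntervalGraph (G.induce X) ∧ ∀ Y : Set V, Y ⊂ X → IsIntervalGraph (G.induce Y)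

/-- A graph is prereduced if it has no minimal forbidden set of at most 10 vertices. -/
def Prereduced {V : Type*} (G : SimpleGraph V) : Prop :=
  ∀ X : Set V, X.ncard ≤ 10 → ¬ IsMinimalForbidden G X

/-- A module: any two vertices of `M` have exactly the same neighbors outside `M`. -/
def IsGraphModule {V : Type*} (G : SimpleGraph V) (M : Set V) : Prop :=
  ∀ u ∈ M, ∀ v ∈ M, ∀ x ∉ M, (G.Adj u x ↔ G.Adj v x)

/-- A graph is reduced if it is prereduced and every nontrivial module induces a clique. -/
def Reduced {V : Type*} [Fintype V] (G : SimpleGraph V) : Prop :=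
  Prereduced G ∧
    ∀ M : Set V, IsGraphModule G M → 1 < M.ncard → M.ncard < Fintype.card V →
      G.IsClique M

/-- Closed neighborhood `N[v]`. -/
def closedNbhd {V : Type*} (G : SimpleGraph V) (v : V) : Set V :=
  insert v (G.neighborSet v)

/-- Closed neighborhood of a set, `N[U] = ⋃ v ∈ U, N[v]`. -/
def closedNbhdSet {V : Type*} (G : SimpleGraph V) (U : Set V) : Set V :=
  ⋃ v ∈ U, closedNbhd G v

/-- The set of common neighbors of a vertex set `X`. -/
def commonNbrs {V : Type*} (G : SimpleGraph V) (X : Set V) : Set V :=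
  {v | ∀ x ∈ X, G.Adj v x}

/-- `P` induces a chordless path: it can be enumerated so that adjacency holds
exactly between consecutive vertices. -/
def IsInducedPath {V : Type*} (G : SimpleGraph V) (P : Set V) : Prop :=
  ∃ n : ℕ, ∃ f : Fin (n + 1) → V, Function.Injective f ∧ Set.range f = P ∧
    ∀ i j : Fin (n + 1), G.Adj (f i) (f j) ↔ (i.val + 1 = j.val ∨ j.val + 1 = i.val)

/-- A shallow terminal: a vertex `s` contained in a minimal forbidden set `W` that is
not a hole, such that `W \ N[s]` induces a chordless path. -/
def ShallowTerminal {V : Type*} (G : SimpleGraph V) (s : V) : Prop :=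
  ∃ W : Set V, IsMinimalForbidden G W ∧ s ∈ W ∧ ¬ IsHole G W ∧
    IsInducedPath G (W \ closedNbhd G s)

/-- A hole cover: a vertex set intersecting every hole. -/
def HoleCover {V : Type*} (G : SimpleGraph V) (C : Set V) : Prop :=
  ∀ H : Set V, IsHole G H → (C ∩ H).Nonempty

/-- A minimal hole cover: a hole cover no proper subset of which is a hole cover. -/
def MinimalHoleCover {V : Type*} (G : SimpleGraph V) (C : Set V) : Prop :=
  HoleCover G C ∧ ∀ C' : Set V, C' ⊂ C → ¬ HoleCover G C'

/-- An interval deletion set: a vertex set whose removal leaves an interval graph. -/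
def IntervalDeletionSet {V : Type*} (G : SimpleGraph V) (Q : Set V) : Prop :=
  IsIntervalGraph (G.induce Qᶜ)

/-- A minimum interval deletion set. -/
def MinIntervalDeletionSet {V : Type*} (G : SimpleGraph V) (Q : Set V) : Prop :=
  IntervalDeletionSet G Q ∧
    ∀ Q' : Set V, IntervalDeletionSet G Q' → Q.ncard ≤ Q'.ncard

/-- Two holes are congenial if each is contained in the closed neighborhood of the other. -/
def Congenial {V : Type*} (G : SimpleGraph V) (H₁ H₂ : Set V) : Prop :=
  H₁ ⊆ closedNbhdSet G H₂ ∧ H₂ ⊆ closedNbhdSet G H₁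

/-- The graph `G − S`: edges of `G` with both endpoints outside `S`
(vertices of `S` become isolated). -/
def deleteSet {V : Type*} (G : SimpleGraph V) (S : Set V) : SimpleGraph V where
  Adj u v := G.Adj u v ∧ u ∉ S ∧ v ∉ S
  symm := ⟨fun u v h => ⟨h.1.symm, h.2.2, h.2.1⟩⟩
  loopless := ⟨fun v h => G.irrefl h.1⟩

/-- In a finite nonempty interval graph, if no vertex of `N[v]` is
simplicial, then `N[v]` is a separator: `G − N[v]` is nonempty and disconnected. -/
theorem stmt_19 {V : Type*} [Fintype V] [Nonempty V] (G : SimpleGraph V)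
    (hG : IsIntervalGraph G) (v : V)
    (hsimp : ∀ u ∈ closedNbhd G v, ¬ G.IsClique (G.neighborSet u)) :
    ((closedNbhd G v)ᶜ : Set V).Nonempty ∧
      ¬ (G.induce ((closedNbhd G v)ᶜ)).Preconnected := by
  obtain ⟨f, hf, hadjf⟩ := hG
  choose a b hab hfab using hf
  have key : ∀ u w : V, u ≠ w → (G.Adj u w ↔ (a u ≤ b w ∧ a w ≤ b u)) := by
    intro u w huw
    rw [hadjf u w huw, hfab, hfab, Set.Icc_inter_Icc, Set.nonempty_Icc,
      max_le_iff, le_min_iff, le_min_iff]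
    exact ⟨fun h => ⟨h.1.2, h.2.1⟩, fun h => ⟨⟨hab u, h.1⟩, ⟨h.2, hab w⟩⟩⟩
  -- dichotomy for vertices outside N[v]
  have dich : ∀ u : V, u ∉ closedNbhd G v → b u < a v ∨ b v < a u := by
    intro u hu
    have hne : u ≠ v := fun h => hu (h ▸ Set.mem_insert _ _)
    have hnadj : ¬ G.Adj u v := fun h =>
      hu (Set.mem_insert_iff.mpr (Or.inr h.symm))
    by_contra hcon
    push_neg at hcon
    exact hnadj ((key u v hne).mpr ⟨hcon.2, hcon.1⟩)
  -- p : vertex with minimal right endpoint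
  obtain ⟨p, -, hp⟩ := Finset.exists_min_image Finset.univ b Finset.univ_nonempty
  have hps : G.IsClique (G.neighborSet p) := by
    intro u hu w hw huw
    have hpu : G.Adj p u := hu
    have hpw : G.Adj p w := hw
    have h1 := (key p u hpu.ne).mp hpu
    have h2 := (key p w hpw.ne).mp hpw
    exact (key u w huw).mpr
      ⟨le_trans h1.2 (hp w (Finset.mem_univ w)), le_trans h2.2 (hp u (Finset.mem_univ u))⟩
  have hpN : p ∉ closedNbhd G v := fun h => hsimp p h hps
  have hpL : b p < a v := by
    rcases dich p hpN with h | h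
    · exact h
    · exact absurd (le_trans (hab p) (hp v (Finset.mem_univ v))) (not_le.mpr h)
  -- q : vertex with maximal left endpoint
  obtain ⟨q, -, hq⟩ := Finset.exists_max_image Finset.univ a Finset.univ_nonempty
  have hqs : G.IsClique (G.neighborSet q) := by
    intro u hu w hw huw
    have hqu : G.Adj q u := hu
    have hqw : G.Adj q w := hw
    have h1 := (key q u hqu.ne).mp hqu
    have h2 := (key q w hqw.ne).mp hqw
    exact (key u w huw).mpr
      ⟨le_trans (hq u (Finset.mem_univ u)) h2.1, le_trans (hq w (Finset.mem_univ w)) h1.1⟩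
  have hqN : q ∉ closedNbhd G v := fun h => hsimp q h hqs
  have hqR : b v < a q := by
    rcases dich q hqN with h | h
    · exact absurd (le_trans (hq v (Finset.mem_univ v)) (hab q)) (not_le.mpr h)
    · exact h
  refine ⟨⟨p, hpN⟩, fun hPre => ?_⟩
  -- invariant: being on the left of v's interval is preserved along walks
  have inv : ∀ (x y : ((closedNbhd G v)ᶜ : Set V))
      (w : (G.induce ((closedNbhd G v)ᶜ)).Walk x y), b x.val < a v → b y.val < a v := by
    intro x y w
    induction w with
    | nil => exact id
    | @cons x z y h w ih =>
      intro hx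
      apply ih
      have hadj' : G.Adj x.val z.val := h
      rcases dich z.val z.property with h1 | h2
      · exact h1
      · have h3 := (key _ _ hadj'.ne).mp hadj'
        exact absurd h3.2 (not_le.mpr (lt_trans (lt_of_lt_of_le hx (hab v)) h2))
  obtain ⟨w⟩ := hPre ⟨p, hpN⟩ ⟨q, hqN⟩
  have hqL := inv _ _ w hpL
  have := hab v; have := hab q
  linarith
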